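/- Let n ≥ 1 and consider configurations of n + 1 points in ℝ^n. Let Pⁿ := {x : Fin (n+1) → EuclideanSpace ℝ (Fin n) | affineSpan ℝ (Set.range x) = ⊤}, and for x ∈ Pⁿ let A_x : Matrix (Fin n) (Fin n) ℝ be the matrix whose j-th column is x (j+1) - x 0. Define Q₊ := {x ∈ Pⁿ | det A_x > 0} and Q₋ := {x ∈ Pⁿ | det A_x < 0}. Then Q₊ and Q₋ are nonempty, open, disjoint, path-connected, their union is Pⁿ, and they are exactly the connected components of Pⁿ (every connected subset of Pⁿ is contained in Q₊ or in Q₋). In particular, Pⁿ has exactly two connected components. -/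

import Mathlib

/-- The matrix whose `j`-th column is `x (j+1) - x 0`. -/
noncomputable def diffMatrix {n : ℕ} (x : Fin (n + 1) → EuclideanSpace ℝ (Fin n)) :
    Matrix (Fin n) (Fin n) ℝ :=
  Matrix.of fun i j => x j.succ i - x 0 i

/-- The set of non-degenerate configurations of `n+1` points in `ℝ^n`. -/
def Pn (n : ℕ) : Set (Fin (n + 1) → EuclideanSpace ℝ (Fin n)) :=
  {x | affineSpan ℝ (Set.range x) = ⊤}

/-- Non-degenerate configurations with positive orientation. -/
noncomputable def Qpos (n : ℕ) : Set (Fin (n + 1) → EuclideanSpace ℝ (Fin n)) :=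
  {x ∈ Pn n | 0 < (diffMatrix x).det}

/-- Non-degenerate configurations with negative orientation. -/
noncomputable def Qneg (n : ℕ) : Set (Fin (n + 1) → EuclideanSpace ℝ (Fin n)) :=
  {x ∈ Pn n | (diffMatrix x).det < 0}

open Matrix Set Finset in
def GPos (n : ℕ) : Set (Matrix (Fin n) (Fin n) ℝ) := {M : Matrix (Fin n) (Fin n) ℝ | 0 < M.det}

def GNeg (n : ℕ) : Set (Matrix (Fin n) (Fin n) ℝ) := {M : Matrix (Fin n) (Fin n) ℝ | M.det < 0}

section aux
open Matrix Set Finset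

variable {n : ℕ}

lemma Pn_iff (x : Fin (n + 1) → EuclideanSpace ℝ (Fin n)) :
    x ∈ Pn n ↔ (diffMatrix x).det ≠ 0 := by
  classical
  have h1 : x ∈ Pn n ↔ vectorSpan ℝ (Set.range x) = ⊤ := by
    rw [Pn, Set.mem_setOf_eq,
      AffineSubspace.affineSpan_eq_top_iff_vectorSpan_eq_top_of_nonempty ℝ _ _ (range_nonempty x)]
  have h2 : vectorSpan ℝ (Set.range x) =
      Submodule.span ℝ (Set.range fun j : Fin n => x j.succ - x 0) := by
    rw [vectorSpan_range_eq_span_range_vsub_right ℝ x 0]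
    apply le_antisymm
    · rw [Submodule.span_le]
      rintro v ⟨i, rfl⟩
      rcases Fin.eq_zero_or_eq_succ i with rfl | ⟨j, rfl⟩
      · simp only [vsub_self]
        exact Submodule.zero_mem _
      · exact Submodule.subset_span ⟨j, by simp [vsub_eq_sub]⟩
    · rw [Submodule.span_le]
      rintro v ⟨j, rfl⟩
      exact Submodule.subset_span ⟨j.succ, by simp [vsub_eq_sub]⟩
  rw [h1, h2]
  set A := diffMatrix x with hA
  let e : EuclideanSpace ℝ (Fin n) ≃ₗ[ℝ] (Fin n → ℝ) :=
    (EuclideanSpace.equiv (Fin n) ℝ).toLinearEquiv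
  have himg : ⇑e '' (Set.range fun j : Fin n => x j.succ - x 0) = Set.range Aᵀ := by
    have hfun : (⇑e ∘ fun j : Fin n => x j.succ - x 0) = Aᵀ := by
      funext j i
      simp [e, hA, diffMatrix, Matrix.transpose_apply]
    rw [← Set.range_comp, hfun]
  have hinj : Function.Injective
      (Submodule.map (e : EuclideanSpace ℝ (Fin n) →ₗ[ℝ] (Fin n → ℝ))) :=
    Submodule.map_injective_of_injective e.injective
  have key : Submodule.span ℝ (Set.range fun j : Fin n => x j.succ - x 0) = ⊤ ↔
      Submodule.span ℝ (Set.range Aᵀ) = ⊤ := by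
    rw [← hinj.eq_iff, Submodule.map_span, Submodule.map_top]
    simp only [LinearEquiv.coe_coe]
    rw [himg, LinearEquiv.range]
  rw [key]
  change Submodule.span ℝ (Set.range (Matrix.col A)) = ⊤ ↔ _
  rw [← Matrix.range_mulVecLin, LinearMap.range_eq_top]
  have hsurj : Function.Surjective A.mulVecLin ↔ Function.Surjective A.mulVec := Iff.rfl
  rw [hsurj, Matrix.mulVec_surjective_iff_isUnit, Matrix.isUnit_iff_isUnit_det, isUnit_iff_ne_zero]






lemma continuous_transvection_path (i j : Fin n) (c : ℝ) :
    Continuous fun s : ℝ => transvection i j (s * c) := by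
  have : (fun s : ℝ => transvection i j (s * c)) =
      fun s : ℝ => (1 : Matrix (Fin n) (Fin n) ℝ) + Matrix.single i j (s * c) :=
    rfl
  rw [this]
  apply Continuous.add continuous_const
  apply continuous_matrix
  intro a b
  simp only [Matrix.single, Matrix.of_apply]
  exact Continuous.if_const _ (continuous_id.mul continuous_const) continuous_const

lemma joined_transvection_mul (t : TransvectionStruct (Fin n) ℝ)
    (M : Matrix (Fin n) (Fin n) ℝ) (hM : 0 < M.det) :
    JoinedIn (GPos n) M (t.toMatrix * M) := by
  have hcont : Continuous fun s : ℝ => transvection t.i t.j (s * t.c) * M :=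
    (continuous_transvection_path t.i t.j t.c).matrix_mul continuous_const
  refine ⟨⟨⟨fun s => transvection t.i t.j ((s : ℝ) * t.c) * M,
      hcont.comp continuous_subtype_val⟩, by simp, by simp [TransvectionStruct.toMatrix]⟩,
    fun s => ?_⟩
  show 0 < (transvection t.i t.j ((s : ℝ) * t.c) * M).det
  rw [Matrix.det_mul, Matrix.det_transvection_of_ne _ _ t.hij, one_mul]
  exact hM

lemma joined_mul_transvection (t : TransvectionStruct (Fin n) ℝ)
    (M : Matrix (Fin n) (Fin n) ℝ) (hM : 0 < M.det) :
    JoinedIn (GPos n) M (M * t.toMatrix) := by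
  have hcont : Continuous fun s : ℝ => M * transvection t.i t.j (s * t.c) :=
    Continuous.matrix_mul continuous_const (continuous_transvection_path t.i t.j t.c)
  refine ⟨⟨⟨fun s => M * transvection t.i t.j ((s : ℝ) * t.c),
      hcont.comp continuous_subtype_val⟩, by simp, by simp [TransvectionStruct.toMatrix]⟩,
    fun s => ?_⟩
  show 0 < (M * transvection t.i t.j ((s : ℝ) * t.c)).det
  rw [Matrix.det_mul, Matrix.det_transvection_of_ne _ _ t.hij, mul_one]
  exact hM

lemma joined_list_transvection_mul (L : List (TransvectionStruct (Fin n) ℝ))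
    (M : Matrix (Fin n) (Fin n) ℝ) (hM : 0 < M.det) :
    JoinedIn (GPos n) M ((L.map TransvectionStruct.toMatrix).prod * M) := by
  induction L with
  | nil => simpa using JoinedIn.refl (show M ∈ GPos n from hM)
  | cons t L ih =>
    have h1 : 0 < ((L.map TransvectionStruct.toMatrix).prod * M).det := by
      rw [Matrix.det_mul, TransvectionStruct.det_toMatrix_prod, one_mul]; exact hM
    have h2 := joined_transvection_mul t _ h1
    rw [List.map_cons, List.prod_cons, mul_assoc]
    exact ih.trans h2

lemma joined_mul_list_transvection (L : List (TransvectionStruct (Fin n) ℝ))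
    (M : Matrix (Fin n) (Fin n) ℝ) (hM : 0 < M.det) :
    JoinedIn (GPos n) M (M * (L.map TransvectionStruct.toMatrix).prod) := by
  induction L generalizing M with
  | nil => simpa using JoinedIn.refl (show M ∈ GPos n from hM)
  | cons t L ih =>
    have hγ := joined_mul_transvection t M hM
    have h1 : 0 < (M * t.toMatrix).det := by
      rw [Matrix.det_mul, t.det, mul_one]; exact hM
    have h2 := ih (M * t.toMatrix) h1
    rw [List.map_cons, List.prod_cons, ← mul_assoc]
    exact hγ.trans h2


lemma sq_transvec {i j : Fin n} (hij : i ≠ j) :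
    let T₁ := transvection i j (1 : ℝ)
    let T₂ := transvection j i (-1 : ℝ)
    (T₁ * T₂ * T₁) * (T₁ * T₂ * T₁) =
      Matrix.diagonal (fun a => if a = i ∨ a = j then (-1 : ℝ) else 1) := by
  intro T₁ T₂
  have hS : T₁ * T₂ * T₁ = 1 + (Matrix.single i j (1:ℝ) - Matrix.single j i 1
      - Matrix.single i i 1 - Matrix.single j j 1) := by
    simp only [T₁, T₂, transvection]
    noncomm_ring
    simp [Matrix.single_mul_single_same, Matrix.single_mul_single_of_ne, hij, hij.symm]
    have hm : ∀ a b : Fin n, Matrix.single a b (-1 : ℝ) = -Matrix.single a b 1 := by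
      intro a b
      rw [← neg_one_smul ℝ (Matrix.single a b (1 : ℝ)), Matrix.smul_single,
        smul_eq_mul, mul_one]
    have h2 : Matrix.single i j (2 : ℝ) =
        Matrix.single i j 1 + Matrix.single i j 1 := by
      rw [← Matrix.single_add]; norm_num
    rw [h2, hm, hm, hm, hm]
    abel
  rw [hS]
  have hD : (Matrix.diagonal fun a => if a = i ∨ a = j then (-1 : ℝ) else 1) =
      1 - Matrix.single i i 2 - Matrix.single j j 2 := by
    ext a b
    by_cases hab : a = b
    · subst hab
      by_cases hai : a = i
      · subst hai
        simp [Matrix.diagonal, Matrix.single, Matrix.one_apply, hij, hij.symm]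
        norm_num
      · by_cases haj : a = j
        · subst haj
          simp [Matrix.diagonal, Matrix.single, Matrix.one_apply, hij, hij.symm, hai]
          norm_num
        · simp [Matrix.diagonal, Matrix.single, Matrix.one_apply, hai, haj,
            Ne.symm hai, Ne.symm haj]
    · simp [Matrix.diagonal, Matrix.single, Matrix.one_apply, hab]
      aesop
  have h2' : ∀ a b : Fin n, Matrix.single a b (2 : ℝ) =
      Matrix.single a b 1 + Matrix.single a b 1 := by
    intro a b; rw [← Matrix.single_add]; norm_num
  noncomm_ring
  simp [Matrix.single_mul_single_same, Matrix.single_mul_single_of_ne, hij, hij.symm]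
  rw [hD, h2' i j, h2' j i, h2' i i, h2' j j]
  abel



-- diag scaling
lemma joined_diag_sign (d : Fin n → ℝ) (hd : 0 < (Matrix.diagonal d).det) :
    JoinedIn (GPos n) (Matrix.diagonal d)
      (Matrix.diagonal fun i => if 0 < d i then (1 : ℝ) else -1) ∧
      (∏ i, (if 0 < d i then (1 : ℝ) else -1)) = 1 := by
  classical
  set ε : Fin n → ℝ := fun i => if 0 < d i then (1 : ℝ) else -1 with hε
  have hdprod : 0 < ∏ i, d i := by rwa [Matrix.det_diagonal] at hd
  have hdne : ∀ i, d i ≠ 0 := fun i hi =>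
    hdprod.ne' (Finset.prod_eq_zero (Finset.mem_univ i) hi)
  -- the path function
  set f : ℝ → Fin n → ℝ := fun s i => (1 - s) * d i + s * ε i with hf
  have hkey : ∀ (a s : ℝ), 0 < a → 0 ≤ s → s ≤ 1 → 0 < (1 - s) * a + s := by
    intro a s ha hs0 hs1
    rcases eq_or_lt_of_le hs0 with h | h
    · have : s = 0 := h.symm
      subst this
      simpa using ha
    · have : 0 ≤ (1 - s) * a := mul_nonneg (by linarith) ha.le
      linarith
  have hsign : ∀ s : ℝ, s ∈ Set.Icc (0:ℝ) 1 → ∀ i, 0 < ε i * f s i := by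
    intro s hs i
    rcases lt_or_ge 0 (d i) with hpos | hneg
    · have hε1 : ε i = 1 := by simp [hε, hpos]
      have := hkey (d i) s hpos hs.1 hs.2
      have hfe : ε i * f s i = (1 - s) * d i + s := by
        simp [hf, hε1]
      linarith [hfe ▸ this]
    · have hneg' : d i < 0 := lt_of_le_of_ne hneg (hdne i)
      have hε1 : ε i = -1 := by simp [hε, not_lt.mpr hneg]
      have := hkey (-(d i)) s (by linarith) hs.1 hs.2
      have hfe : ε i * f s i = (1 - s) * (-(d i)) + s := by
        simp [hf, hε1]; ring
      rw [hfe]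
      exact this
  have hdet : ∀ s : ℝ, s ∈ Set.Icc (0:ℝ) 1 → 0 < (∏ i, ε i) * (Matrix.diagonal (f s)).det := by
    intro s hs
    rw [Matrix.det_diagonal, ← Finset.prod_mul_distrib]
    exact Finset.prod_pos fun i _ => hsign s hs i
  have hS1 : (∏ i, ε i) = 1 := by
    have h0 := hdet 0 (by constructor <;> norm_num)
    have hf0 : f 0 = d := by funext i; simp [hf]
    rw [hf0] at h0
    have hSpos : 0 < ∏ i, ε i := by
      by_contra h
      push_neg at h
      nlinarith [Matrix.det_diagonal (d := d)]
    have habs : |∏ i, ε i| = 1 := by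
      rw [Finset.abs_prod]
      apply Finset.prod_eq_one
      intro i _
      rcases ite_eq_or_eq (0 < d i) (1:ℝ) (-1) with h | h <;> simp [hε, h]
    rwa [abs_of_pos hSpos] at habs
  refine ⟨?_, hS1⟩
  have hcont : Continuous fun s : ℝ => Matrix.diagonal (f s) := by
    apply Continuous.matrix_diagonal
    apply continuous_pi
    intro i
    fun_prop
  refine ⟨⟨⟨fun s => Matrix.diagonal (f s), hcont.comp continuous_subtype_val⟩, ?_, ?_⟩,
    fun s => ?_⟩
  · simp [hf]
  · simp [hf]
  · show 0 < (Matrix.diagonal (f s)).det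
    have := hdet s s.2
    rw [hS1, one_mul] at this
    exact this

lemma joined_signDiag_one :
    ∀ (k : ℕ) (ε : Fin n → ℝ), (Finset.univ.filter fun i => ε i = -1).card = k →
      (∀ i, ε i = 1 ∨ ε i = -1) → (∏ i, ε i) = 1 →
      JoinedIn (GPos n) (Matrix.diagonal ε) 1 := by
  classical
  intro k
  induction k using Nat.strong_induction_on with
  | _ k IH =>
  intro ε hk hε hprod
  have hone : (1 : Matrix (Fin n) (Fin n) ℝ) ∈ GPos n := by
    show (0:ℝ) < (1 : Matrix (Fin n) (Fin n) ℝ).det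
    simp
  have hpow : ∀ (δ : Fin n → ℝ), (∀ i, δ i = 1 ∨ δ i = -1) →
      (∏ i, δ i) = (-1 : ℝ) ^ (Finset.univ.filter fun i => δ i = -1).card := by
    intro δ hδ
    rw [← Finset.prod_filter_mul_prod_filter_not Finset.univ (fun i => δ i = -1)]
    rw [Finset.prod_congr rfl (fun i hi => (Finset.mem_filter.mp hi).2), Finset.prod_const]
    have : ∀ i ∈ Finset.univ.filter fun i => ¬ δ i = -1, δ i = 1 := by
      intro i hi
      rcases hδ i with h | h
      · exact h
      · exact absurd h (Finset.mem_filter.mp hi).2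
    rw [Finset.prod_congr rfl this, Finset.prod_const, one_pow, mul_one]
  rcases Nat.eq_zero_or_pos k with rfl | hkpos
  · have hall : ∀ i, ε i = 1 := by
      intro i
      rcases hε i with h | h
      · exact h
      · exfalso
        have : i ∈ Finset.univ.filter fun i => ε i = -1 := Finset.mem_filter.mpr ⟨Finset.mem_univ i, h⟩
        rw [Finset.card_eq_zero.mp hk] at this
        exact absurd this (Finset.notMem_empty i)
    rw [show ε = fun _ => (1:ℝ) from funext hall, Matrix.diagonal_one]
    exact JoinedIn.refl hone
  · have heven : Even k := by
      have := hpow ε hε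
      rw [hprod, hk] at this
      exact (neg_one_pow_eq_one_iff_even (by norm_num)).mp this.symm
    have hk2 : 2 ≤ k := by
      obtain ⟨m, rfl⟩ := heven
      omega
    have h1lt : 1 < (Finset.univ.filter fun i => ε i = -1).card := by omega
    obtain ⟨i, j, hi, hj, hij⟩ := Finset.one_lt_card_iff.mp h1lt
    have hεi : ε i = -1 := (Finset.mem_filter.mp hi).2
    have hεj : ε j = -1 := (Finset.mem_filter.mp hj).2
    set ε' : Fin n → ℝ := Function.update (Function.update ε i 1) j 1 with hε'def
    have hε'i : ε' i = 1 := by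
      rw [hε'def, Function.update_of_ne hij, Function.update_self]
    have hε'j : ε' j = 1 := by rw [hε'def, Function.update_self]
    have hε'other : ∀ a, a ≠ i → a ≠ j → ε' a = ε a := by
      intro a hai haj
      rw [hε'def, Function.update_of_ne haj, Function.update_of_ne hai]
    have hε' : ∀ a, ε' a = 1 ∨ ε' a = -1 := by
      intro a
      by_cases hai : a = i
      · subst hai; left; exact hε'i
      by_cases haj : a = j
      · subst haj; left; exact hε'j
      · rw [hε'other a hai haj]; exact hε a
    have hfilter : (Finset.univ.filter fun a => ε' a = -1) =
        ((Finset.univ.filter fun a => ε a = -1).erase i).erase j := by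
      ext a
      simp only [Finset.mem_filter, Finset.mem_univ, true_and, Finset.mem_erase]
      constructor
      · intro h
        have hai : a ≠ i := by rintro rfl; rw [hε'i] at h; norm_num at h
        have haj : a ≠ j := by rintro rfl; rw [hε'j] at h; norm_num at h
        exact ⟨haj, hai, by rwa [hε'other a hai haj] at h⟩
      · rintro ⟨haj, hai, h⟩
        rwa [hε'other a hai haj]
    have hcard' : (Finset.univ.filter fun a => ε' a = -1).card = k - 2 := by
      have hjmem : j ∈ (Finset.univ.filter fun a => ε a = -1).erase i :=
        Finset.mem_erase.mpr ⟨hij.symm, hj⟩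
      rw [hfilter, Finset.card_erase_of_mem hjmem, Finset.card_erase_of_mem hi, hk]
      omega
    have hprod' : (∏ a, ε' a) = 1 := by
      rw [hpow ε' hε', hcard']
      have : Even (k - 2) := by
        obtain ⟨m, rfl⟩ := heven
        exact ⟨m - 1, by omega⟩
      exact this.neg_one_pow
    have hIH := IH (k - 2) (by omega) ε' hcard' hε' hprod'
    -- now connect diagonal ε to diagonal ε'
    have hdet' : 0 < (Matrix.diagonal ε').det := by
      rw [Matrix.det_diagonal, hprod']
      norm_num
    set L : List (TransvectionStruct (Fin n) ℝ) :=
      [⟨i, j, hij, 1⟩, ⟨j, i, hij.symm, -1⟩, ⟨i, j, hij, 1⟩,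
       ⟨i, j, hij, 1⟩, ⟨j, i, hij.symm, -1⟩, ⟨i, j, hij, 1⟩] with hL
    have hjoin := joined_list_transvection_mul L (Matrix.diagonal ε') hdet'
    have hprodL : (L.map TransvectionStruct.toMatrix).prod * Matrix.diagonal ε' =
        Matrix.diagonal ε := by
      have hLp : (L.map TransvectionStruct.toMatrix).prod =
          (transvection i j (1:ℝ) * transvection j i (-1) * transvection i j 1) *
          (transvection i j 1 * transvection j i (-1) * transvection i j 1) := by
        simp [hL, TransvectionStruct.toMatrix, mul_assoc]
      rw [hLp, sq_transvec hij, Matrix.diagonal_mul_diagonal]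
      have heq : (fun a => (if a = i ∨ a = j then (-1:ℝ) else 1) * ε' a) = ε := by
        funext a
        by_cases hai : a = i
        · subst hai; simp [hε'i, hεi]
        by_cases haj : a = j
        · subst haj; simp [hε'j, hεj]
        · simp [hai, haj, hε'other a hai haj]
      rw [heq]
    rw [hprodL] at hjoin
    exact (hjoin.symm).trans hIH

lemma isPathConnected_GPos : IsPathConnected (GPos n) := by
  have hone : (1 : Matrix (Fin n) (Fin n) ℝ) ∈ GPos n := by
    show (0:ℝ) < (1 : Matrix (Fin n) (Fin n) ℝ).det
    simp
  refine ⟨1, hone, fun {M} hM => ?_⟩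
  have hM' : 0 < M.det := hM
  obtain ⟨L, L', D, hD⟩ := Matrix.Pivot.exists_list_transvec_mul_mul_list_transvec_eq_diagonal M
  have h1 : JoinedIn (GPos n) M ((L.map TransvectionStruct.toMatrix).prod * M) :=
    joined_list_transvection_mul L M hM'
  have hdet1 : 0 < ((L.map TransvectionStruct.toMatrix).prod * M).det := by
    rw [Matrix.det_mul, TransvectionStruct.det_toMatrix_prod, one_mul]; exact hM'
  have h2 := joined_mul_list_transvection L' ((L.map TransvectionStruct.toMatrix).prod * M) hdet1
  rw [hD] at h2
  have hdetD : 0 < (Matrix.diagonal D).det := h2.target_mem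
  obtain ⟨h3, hprodsign⟩ := joined_diag_sign D hdetD
  have h4 := joined_signDiag_one _ (fun i => if 0 < D i then (1:ℝ) else -1) rfl
    (fun i => by by_cases h : 0 < D i <;> simp [h]) hprodsign
  exact (((h1.trans h2).trans h3).trans h4).symm



lemma continuous_diffMatrix :
    Continuous fun x : Fin (n + 1) → EuclideanSpace ℝ (Fin n) => diffMatrix x := by
  apply continuous_matrix
  intro i j
  exact ((EuclideanSpace.proj i).continuous.comp (continuous_apply j.succ)).sub
    ((EuclideanSpace.proj i).continuous.comp (continuous_apply 0))

/-- reconstruction map -/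
noncomputable def recons (p : EuclideanSpace ℝ (Fin n) × Matrix (Fin n) (Fin n) ℝ) :
    Fin (n + 1) → EuclideanSpace ℝ (Fin n) :=
  fun k => Fin.cases p.1 (fun j => (WithLp.toLp 2 (fun i => p.2 i j + p.1 i) : EuclideanSpace ℝ (Fin n))) k

lemma diffMatrix_recons (p : EuclideanSpace ℝ (Fin n) × Matrix (Fin n) (Fin n) ℝ) :
    diffMatrix (recons p) = p.2 := by
  ext i j
  simp [diffMatrix, recons]

lemma recons_diffMatrix (x : Fin (n + 1) → EuclideanSpace ℝ (Fin n)) :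
    recons (x 0, diffMatrix x) = x := by
  funext k
  induction k using Fin.cases with
  | zero => simp [recons]
  | succ j =>
    ext i
    simp [recons, diffMatrix]

lemma continuous_recons : Continuous (recons (n := n)) := by
  apply continuous_pi
  intro k
  induction k using Fin.cases with
  | zero => exact continuous_fst
  | succ j =>
    have : (fun p : EuclideanSpace ℝ (Fin n) × Matrix (Fin n) (Fin n) ℝ =>
        recons p j.succ) = fun p => (WithLp.toLp 2 (fun i => p.2 i j + p.1 i) : EuclideanSpace ℝ (Fin n)) := by
      funext p
      simp [recons]
    rw [this]
    refine (PiLp.continuous_toLp 2 _).comp (continuous_pi fun i => ?_)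
    exact Continuous.add (f := fun p : EuclideanSpace ℝ (Fin n) × Matrix (Fin n) (Fin n) ℝ =>
        p.2 i j) (g := fun p => p.1 i)
      ((continuous_apply j).comp ((continuous_apply i).comp continuous_snd))
      ((EuclideanSpace.proj i).continuous.comp continuous_fst)

lemma isPathConnected_prod {X Y : Type*} [TopologicalSpace X] [TopologicalSpace Y]
    {s : Set X} {t : Set Y} (hs : IsPathConnected s) (ht : IsPathConnected t) :
    IsPathConnected (s ×ˢ t) := by
  obtain ⟨a, ha, hsa⟩ := hs
  obtain ⟨b, hb, htb⟩ := ht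
  refine ⟨(a, b), ⟨ha, hb⟩, fun {p} hp => ?_⟩
  obtain ⟨γ₁, hγ₁⟩ := hsa hp.1
  obtain ⟨γ₂, hγ₂⟩ := htb hp.2
  exact ⟨γ₁.prod γ₂, fun t => ⟨hγ₁ t, hγ₂ t⟩⟩

lemma isPathConnected_GNeg (hn : 1 ≤ n) : IsPathConnected (GNeg n) := by
  classical
  set i₀ : Fin n := ⟨0, hn⟩ with hi₀
  set N₀ : Matrix (Fin n) (Fin n) ℝ :=
    Matrix.diagonal (fun i => if i = i₀ then (-1 : ℝ) else 1) with hN₀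
  have hdetN₀ : N₀.det = -1 := by
    rw [hN₀, Matrix.det_diagonal]
    rw [Finset.prod_ite_eq' Finset.univ i₀ (fun _ => _)]
    simp
  have hN₀N₀ : N₀ * N₀ = 1 := by
    rw [hN₀, Matrix.diagonal_mul_diagonal]
    have : (fun i => (if i = i₀ then (-1:ℝ) else 1) * (if i = i₀ then (-1:ℝ) else 1)) =
        fun _ => (1:ℝ) := by
      funext i
      by_cases h : i = i₀ <;> simp [h]
    rw [this, Matrix.diagonal_one]
  have himg : GNeg n = (fun M => N₀ * M) '' GPos n := by
    ext M
    constructor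
    · intro hM
      refine ⟨N₀ * M, ?_, by show N₀ * (N₀ * M) = M; rw [← mul_assoc, hN₀N₀, one_mul]⟩
      show 0 < (N₀ * M).det
      rw [Matrix.det_mul, hdetN₀]
      have : M.det < 0 := hM
      nlinarith
    · rintro ⟨M', hM', rfl⟩
      show (N₀ * M').det < 0
      rw [Matrix.det_mul, hdetN₀]
      have : 0 < M'.det := hM'
      nlinarith
  rw [himg]
  exact isPathConnected_GPos.image (continuous_const.matrix_mul continuous_id)

lemma Qpos_eq : Qpos n = (fun x => (diffMatrix x).det) ⁻¹' Set.Ioi 0 := by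
  ext x
  constructor
  · intro hx
    exact hx.2
  · intro hx
    exact ⟨(Pn_iff x).mpr (ne_of_gt hx), hx⟩

lemma Qneg_eq : Qneg n = (fun x => (diffMatrix x).det) ⁻¹' Set.Iio 0 := by
  ext x
  constructor
  · intro hx
    exact hx.2
  · intro hx
    exact ⟨(Pn_iff x).mpr (ne_of_lt hx), hx⟩

lemma continuous_detDiff :
    Continuous fun x : Fin (n + 1) → EuclideanSpace ℝ (Fin n) => (diffMatrix x).det :=
  continuous_diffMatrix.matrix_det

lemma Qpos_img : Qpos n = recons '' (Set.univ ×ˢ GPos n) := by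
  ext x
  rw [Qpos_eq]
  constructor
  · intro hx
    exact ⟨(x 0, diffMatrix x), ⟨Set.mem_univ _, hx⟩, recons_diffMatrix x⟩
  · rintro ⟨p, ⟨-, hp⟩, rfl⟩
    show 0 < (diffMatrix (recons p)).det
    rw [diffMatrix_recons]
    exact hp

lemma Qneg_img : Qneg n = recons '' (Set.univ ×ˢ GNeg n) := by
  ext x
  rw [Qneg_eq]
  constructor
  · intro hx
    exact ⟨(x 0, diffMatrix x), ⟨Set.mem_univ _, hx⟩, recons_diffMatrix x⟩
  · rintro ⟨p, ⟨-, hp⟩, rfl⟩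
    show (diffMatrix (recons p)).det < 0
    rw [diffMatrix_recons]
    exact hp

end aux

theorem nondegenerate_two_components {n : ℕ} (hn : 1 ≤ n) :
    (Qpos n).Nonempty ∧ (Qneg n).Nonempty ∧
    IsOpen (Qpos n) ∧ IsOpen (Qneg n) ∧
    Disjoint (Qpos n) (Qneg n) ∧
    IsPathConnected (Qpos n) ∧ IsPathConnected (Qneg n) ∧
    Qpos n ∪ Qneg n = Pn n ∧
    (∀ S : Set (Fin (n + 1) → EuclideanSpace ℝ (Fin n)),
      S ⊆ Pn n → IsConnected S → S ⊆ Qpos n ∨ S ⊆ Qneg n) := by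
  classical
  have hGpos1 : (1 : Matrix (Fin n) (Fin n) ℝ) ∈ GPos n := by
    show (0:ℝ) < (1 : Matrix (Fin n) (Fin n) ℝ).det
    simp
  have hopen_pos : IsOpen (Qpos n) := by
    rw [Qpos_eq]
    exact isOpen_Ioi.preimage continuous_detDiff
  have hopen_neg : IsOpen (Qneg n) := by
    rw [Qneg_eq]
    exact isOpen_Iio.preimage continuous_detDiff
  have hdisj : Disjoint (Qpos n) (Qneg n) := by
    rw [Set.disjoint_left]
    intro x hx hx'
    exact absurd hx'.2 (not_lt.mpr hx.2.le)
  refine ⟨?_, ?_, hopen_pos, hopen_neg, hdisj, ?_, ?_, ?_, ?_⟩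
  · refine ⟨recons (0, 1), ?_⟩
    rw [Qpos_eq]
    show 0 < (diffMatrix (recons (0, 1))).det
    rw [diffMatrix_recons]
    simp
  · set i₀ : Fin n := ⟨0, hn⟩ with hi₀
    set N₀ : Matrix (Fin n) (Fin n) ℝ :=
      Matrix.diagonal (fun i => if i = i₀ then (-1 : ℝ) else 1) with hN₀
    refine ⟨recons (0, N₀), ?_⟩
    rw [Qneg_eq]
    show (diffMatrix (recons (0, N₀))).det < 0
    rw [diffMatrix_recons, hN₀, Matrix.det_diagonal,
      Finset.prod_ite_eq' Finset.univ i₀ (fun _ => _)]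
    simp
  · rw [Qpos_img]
    exact (isPathConnected_prod (convex_univ.isPathConnected ⟨0, Set.mem_univ 0⟩)
      isPathConnected_GPos).image continuous_recons
  · rw [Qneg_img]
    exact (isPathConnected_prod (convex_univ.isPathConnected ⟨0, Set.mem_univ 0⟩)
      (isPathConnected_GNeg hn)).image continuous_recons
  · ext x
    rw [Qpos_eq, Qneg_eq]
    constructor
    · rintro (hx | hx)
      · exact (Pn_iff x).mpr (ne_of_gt hx)
      · exact (Pn_iff x).mpr (ne_of_lt hx)
    · intro hx
      rcases lt_or_gt_of_ne ((Pn_iff x).mp hx) with h | h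
      · exact Or.inr h
      · exact Or.inl h
  · intro S hS hScon
    have hcover : S ⊆ Qpos n ∪ Qneg n := by
      intro x hx
      rcases lt_or_gt_of_ne ((Pn_iff x).mp (hS hx)) with h | h
      · exact Or.inr ⟨hS hx, h⟩
      · exact Or.inl ⟨hS hx, h⟩
    exact hScon.isPreconnected.subset_or_subset hopen_pos hopen_neg hdisj hcover
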